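/- If Ω ⊂ ℝ^d satisfies a uniform exterior ball condition of radius r > 0 and f⁺ ∈ L^∞(Ω) is a nonnegative density, then the pushforward (P_{∂Ω})#(f⁺ dx) is absolutely continuous with respect to the surface measure H^{d−1}⌊∂Ω with bounded density, with bound depending only on d, r, diam(Ω), and ‖f⁺‖_∞. -/

import Mathlib

open MeasureTheory Metric Set Filter
open scoped MeasureTheory ENNReal Topology

/-- `Ω` satisfies a uniform exterior ball condition of radius `r`: for every boundary point
`x` there is `y ∉ Ω` with `|x - y| = r` and `B(y,r) ∩ Ω = ∅`. -/
def ExteriorBallCondition {d : ℕ} (Ω : Set (EuclideanSpace ℝ (Fin d))) (r : ℝ) : Prop :=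
  ∀ x ∈ frontier Ω, ∃ y, y ∉ Ω ∧ dist x y = r ∧ Metric.ball y r ∩ Ω = ∅

section Helpers

variable {V : Type*} [NormedAddCommGroup V] [InnerProductSpace ℝ V]

local notation "⟪" x ", " y "⟫" => @inner ℝ _ _ x y

-- crossing lemma
lemma seg_crossing {V : Type*} [NormedAddCommGroup V] [NormedSpace ℝ V]
    {Ω : Set V} {z w : V} (hz : z ∈ Ω) (hw : w ∉ Ω) :
    ∃ p ∈ frontier Ω, p ∈ segment ℝ z w := by
  by_contra h
  push_neg at h
  have hsub : segment ℝ z w ⊆ interior Ω ∪ interior Ωᶜ := by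
    intro p hp
    rcases Classical.em (p ∈ Ω) with hpΩ | hpΩ
    · left
      have : p ∈ closure Ω := subset_closure hpΩ
      rw [closure_eq_interior_union_frontier] at this
      rcases this with h1 | h1
      · exact h1
      · exact absurd h1 (h p · hp)
    · right
      have : p ∈ closure Ωᶜ := subset_closure hpΩ
      rw [closure_eq_interior_union_frontier] at this
      rcases this with h1 | h1
      · exact h1
      · rw [frontier_compl] at h1
        exact absurd h1 (h p · hp)
  have hconn : IsPreconnected (segment ℝ z w) := (convex_segment z w).isPreconnected
  rcases hconn.subset_or_subset isOpen_interior isOpen_interior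
      (by
        rw [disjoint_iff_inter_eq_empty]
        apply eq_empty_of_subset_empty
        intro p hp
        exact (interior_subset hp.2 : p ∈ Ωᶜ) (interior_subset hp.1))
      hsub with hc | hc
  · exact hw (interior_subset (hc (right_mem_segment ℝ z w)))
  · exact (interior_subset (hc (left_mem_segment ℝ z w)) : z ∈ Ωᶜ) hz

lemma dist_le_right_of_mem_segment {z w p : V} (hp : p ∈ segment ℝ z w) :
    dist z p ≤ dist z w := by
  rcases hp with ⟨a, b, ha, hb, hab, rfl⟩
  have : a • z + b • w - z = b • (w - z) := by
    rw [show a = 1 - b by linarith]; module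
  rw [dist_eq_norm', this, dist_eq_norm', norm_smul]
  simpa [Real.norm_eq_abs, abs_of_nonneg hb] using
    mul_le_of_le_one_left (norm_nonneg _) (by simpa [abs_of_nonneg hb, hab] using
      (by linarith : b ≤ 1))

/-- Key: exterior ball forces the frontier within `dist z y - r`. -/
lemma strongDist {Ω : Set V} {z y : V} {r : ℝ} (hr : 0 < r) (hz : z ∈ Ω)
    (hball : ball y r ∩ Ω = ∅) :
    r + infDist z (frontier Ω) ≤ dist z y := by
  have hzball : z ∉ ball y r := fun h => (eq_empty_iff_forall_notMem.1 hball z) ⟨h, hz⟩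
  have hD : r ≤ dist z y := by
    by_contra h; exact hzball (by simpa [mem_ball, dist_comm] using not_le.mp h)
  set D := dist z y with hDdef
  have hD0 : 0 < D := lt_of_lt_of_le hr hD
  set w := y + (r / D) • (z - y) with hw
  have hwy : dist w y = r := by
    rw [dist_eq_norm]
    simp only [hw, add_sub_cancel_left, norm_smul, Real.norm_eq_abs,
      abs_of_nonneg (div_nonneg hr.le hD0.le)]
    rw [show ‖z - y‖ = D by rw [hDdef, dist_eq_norm]]
    field_simp
  have hzw : dist z w = D - r := by
    have : z - w = (1 - r / D) • (z - y) := by rw [hw]; module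
    rw [dist_eq_norm, this, norm_smul, Real.norm_eq_abs,
      abs_of_nonneg (by rw [sub_nonneg]; exact div_le_one_of_le₀ hD hD0.le)]
    rw [show ‖z - y‖ = D by rw [hDdef, dist_eq_norm]]
    field_simp
  have hwclos : w ∈ closure (Ωᶜ) := by
    have h1 : w ∈ closedBall y r := by rw [mem_closedBall]; exact hwy.le
    have h2 : closedBall y r ⊆ closure (Ωᶜ) := by
      rw [← closure_ball y hr.ne']
      exact closure_mono (fun p hp => fun hpΩ =>
        (eq_empty_iff_forall_notMem.1 hball p) ⟨hp, hpΩ⟩)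
    exact h2 h1
  have : ∃ p ∈ frontier Ω, dist z p ≤ D - r := by
    rcases Classical.em (w ∈ Ω) with hwΩ | hwΩ
    · refine ⟨w, ?_, hzw.le⟩
      rw [frontier_eq_closure_inter_closure]
      exact ⟨subset_closure hwΩ, hwclos⟩
    · rcases seg_crossing hz hwΩ with ⟨p, hpf, hpseg⟩
      exact ⟨p, hpf, (dist_le_right_of_mem_segment hpseg).trans hzw.le⟩
  rcases this with ⟨p, hpf, hpd⟩
  have : infDist z (frontier Ω) ≤ dist z p := infDist_le_dist_of_mem hpf
  linarith

lemma collinear {Ω : Set V} {z x y : V} {r : ℝ} (hr : 0 < r) (hz : z ∈ Ω)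
    (hxy : dist x y = r) (hball : ball y r ∩ Ω = ∅)
    (ht : dist z x = infDist z (frontier Ω)) :
    z = x + ((dist z x) / r) • (x - y) := by
  set t := dist z x with htdef
  have htnn : 0 ≤ t := dist_nonneg
  have h1 : r + t ≤ dist z y := by rw [ht]; exact strongDist hr hz hball
  have heq : dist z x + dist x y = dist z y :=
    le_antisymm (by rw [hxy, ← htdef]; linarith [dist_triangle z x y]) (dist_triangle z x y)
  have hW : Wbtw ℝ z x y := dist_add_dist_eq_iff.mp heq
  have hseg : x ∈ segment ℝ z y := (mem_segment_iff_wbtw).mpr hW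
  rcases hseg with ⟨a, b, ha, hb, hab, hx⟩
  have hdzy : dist z y = t + r := by rw [← heq, hxy]
  have hxz : x - z = b • (y - z) := by
    rw [← hx, show a = 1 - b by linarith]; module
  have hbval : b * (t + r) = t := by
    have : dist z x = b * dist z y := by
      rw [dist_eq_norm', dist_eq_norm', hxz, norm_smul, Real.norm_eq_abs, abs_of_nonneg hb]
    rw [← hdzy, ← this]
  have hane : a ≠ 0 := by
    have : a * (t + r) = r := by
      have : a = 1 - b := by linarith
      rw [this]; nlinarith
    intro h; rw [h] at this; simp at this; nlinarith
  have hb' : b = t / (t + r) := by field_simp; linarith [hbval]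
  have ha' : a = r / (t + r) := by
    rw [show a = 1 - b by linarith, hb']; field_simp; ring
  have haz : a • z = x - b • y := by rw [← hx]; module
  have hz' : z = a⁻¹ • (x - b • y) := by
    rw [← haz, smul_smul, inv_mul_cancel₀ hane, one_smul]
  rw [hz', ha', hb']
  have htr : t + r ≠ 0 := by positivity
  match_scalars <;> (field_simp; try ring)

lemma norm_sq_expand (u v w : V) (s t : ℝ) :
    ‖u - s•v - t•w‖^2 = ‖u‖^2 + s^2*‖v‖^2 + t^2*‖w‖^2
      - 2*s*⟪u,v⟫ - 2*t*⟪u,w⟫ + 2*s*t*⟪v,w⟫ := by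
  have h : ∀ a : V, ‖a‖^2 = ⟪a,a⟫ := fun a => (real_inner_self_eq_norm_sq a).symm
  rw [h, h u, h v, h w]
  simp only [inner_sub_left, inner_sub_right, inner_smul_left, inner_smul_right,
    RCLike.ofReal_real_eq_id, id, conj_trivial]
  have h1 : ⟪v,u⟫ = ⟪u,v⟫ := real_inner_comm u v
  have h2 : ⟪w,u⟫ = ⟪u,w⟫ := real_inner_comm u w
  have h3 : ⟪w,v⟫ = ⟪v,w⟫ := real_inner_comm v w
  rw [h1, h2, h3]; ring

lemma sq_le_imp_le {a b : ℝ} (ha : 0 ≤ a) (hb : 0 ≤ b) (h : a^2 ≤ b^2) : a ≤ b := by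
  nlinarith

set_option maxHeartbeats 2000000 in
lemma key_dist {r L δ η : ℝ} {z₁ z₂ x₁ x₂ y₁ y₂ : V} {t₁ t₂ : ℝ}
    (hr : 0 < r) (hδ : 0 ≤ δ) (hη : 0 ≤ η)
    (hz1 : z₁ = x₁ + (t₁/r) • (x₁ - y₁)) (hz2 : z₂ = x₂ + (t₂/r) • (x₂ - y₂))
    (hxy1 : ‖x₁ - y₁‖ = r) (hxy2 : ‖x₂ - y₂‖ = r)
    (hu : ‖x₁ - x₂‖ ≤ δ)
    (ht1 : 0 < t₁) (ht2 : 0 < t₂)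
    (ht21 : t₂ ≤ 2*t₁) (ht1L : t₁ ≤ L) (ht2L : t₂ ≤ L)
    (hd12 : t₁ ≤ t₂ + η) (hd21 : t₂ ≤ t₁ + η)
    (hstrong : r + t₁ ≤ ‖z₁ - y₂‖)
    (hfeet : r ≤ ‖x₂ - y₁‖)
    (hintb : t₂ ≤ ‖x₁ - z₂‖) :
    ‖z₁ - z₂‖ ≤ δ + η + δ*(1 + (2*L/r + L^2/r^2 + 2)) := by
  have hrne : r ≠ 0 := hr.ne'
  set ν₁ : V := r⁻¹ • (y₁ - x₁) with hν₁def
  set ν₂ : V := r⁻¹ • (y₂ - x₂) with hν₂def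
  have hnν₁ : ‖ν₁‖ = 1 := by
    rw [hν₁def, norm_smul, Real.norm_eq_abs, abs_of_nonneg (inv_nonneg.2 hr.le),
      norm_sub_rev, hxy1, inv_mul_cancel₀ hrne]
  have hnν₂ : ‖ν₂‖ = 1 := by
    rw [hν₂def, norm_smul, Real.norm_eq_abs, abs_of_nonneg (inv_nonneg.2 hr.le),
      norm_sub_rev, hxy2, inv_mul_cancel₀ hrne]
  have hz1' : z₁ = x₁ - t₁ • ν₁ := by
    calc z₁ = x₁ + (t₁/r) • (x₁ - y₁) := hz1
      _ = x₁ - (t₁/r) • (y₁ - x₁) := by module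
      _ = x₁ - t₁ • ν₁ := by rw [hν₁def, smul_smul, ← div_eq_mul_inv]
  have hz2' : z₂ = x₂ - t₂ • ν₂ := by
    calc z₂ = x₂ + (t₂/r) • (x₂ - y₂) := hz2
      _ = x₂ - (t₂/r) • (y₂ - x₂) := by module
      _ = x₂ - t₂ • ν₂ := by rw [hν₂def, smul_smul, ← div_eq_mul_inv]
  have hy₂ : y₂ = x₂ + r • ν₂ := by rw [hν₂def, smul_inv_smul₀ hrne]; abel
  have hy₁ : y₁ = x₁ + r • ν₁ := by rw [hν₁def, smul_inv_smul₀ hrne]; abel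
  set u : V := x₁ - x₂ with hudef
  set A : ℝ := ⟪u,ν₁⟫ with hA
  set B : ℝ := ⟪u,ν₂⟫ with hB
  set c : ℝ := ⟪ν₁,ν₂⟫ with hc
  set U : ℝ := ‖u‖ with hU
  have hUnn : 0 ≤ U := norm_nonneg _
  have hUδ : U ≤ δ := hu
  -- strong inequality expanded
  have e1 : z₁ - y₂ = u - t₁ • ν₁ - r • ν₂ := by rw [hz1', hy₂, hudef]; module
  have estrong : (r + t₁)^2 ≤ U^2 + t₁^2 + r^2 - 2*t₁*A - 2*r*B + 2*t₁*r*c := by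
    have h1 : (r + t₁)^2 ≤ ‖z₁ - y₂‖^2 := by
      have := norm_nonneg (z₁ - y₂)
      nlinarith
    rw [e1, norm_sq_expand, hnν₁, hnν₂] at h1
    rw [← hA, ← hB, ← hc] at h1
    nlinarith [h1]
  -- feet inequality
  have e2 : x₂ - y₁ = -(u - (-r) • ν₁ - (0:ℝ) • (0:V)) := by rw [hy₁, hudef]; module
  have efeet : 0 ≤ U^2 + 2*r*A := by
    have h1 : r^2 ≤ ‖x₂ - y₁‖^2 := by nlinarith [norm_nonneg (x₂ - y₁)]
    rw [e2, norm_neg, norm_sq_expand, hnν₁] at h1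
    simp only [inner_zero_right, norm_zero] at h1
    rw [← hA] at h1
    nlinarith [h1]
  -- interior-ball inequality
  have e3 : x₁ - z₂ = u - (-t₂) • ν₂ - (0:ℝ) • (0:V) := by rw [hz2', hudef]; module
  have eint : 0 ≤ U^2 + 2*t₂*B := by
    have h1 : t₂^2 ≤ ‖x₁ - z₂‖^2 := by nlinarith [norm_nonneg (x₁ - z₂)]
    rw [e3, norm_sq_expand, hnν₂] at h1
    simp only [inner_zero_right, norm_zero] at h1
    rw [← hB] at h1
    nlinarith [h1]
  -- combine: 2 t₁ r² t₂ (1 - c) ≤ U² (r t₂ + t₁ t₂ + r²)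
  have hcomb : 2*t₁*r^2*t₂*(1-c) ≤ U^2*(r*t₂ + t₁*t₂ + r^2) := by
    have k1 : 0 ≤ U^2 - 2*t₁*A - 2*r*B - 2*t₁*r*(1-c) := by nlinarith [estrong]
    nlinarith [mul_nonneg (mul_nonneg hr.le ht2.le) k1,
      mul_nonneg (mul_nonneg ht1.le ht2.le) efeet,
      mul_nonneg (sq_nonneg r) eint, mul_pos hr ht2, mul_pos ht1 ht2]
  set S : ℝ := 2*L/r + L^2/r^2 + 2 with hS
  have hL0 : 0 < L := lt_of_lt_of_le ht1 ht1L
  have hS0 : 0 ≤ S := by positivity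
  -- ‖ν₁ - ν₂‖² = 2 - 2c
  have enn : ‖ν₁ - ν₂‖^2 = 2 - 2*c := by
    have : ν₁ - ν₂ = ν₁ - (1:ℝ) • ν₂ - (0:ℝ) • (0:V) := by module
    rw [this, norm_sq_expand, hnν₁, hnν₂]
    simp only [inner_zero_right, norm_zero, ← hc]
    ring
  have hbsq : t₂^2 * ‖ν₁ - ν₂‖^2 ≤ δ^2 * S := by
    rw [enn]
    have key : t₁*r^2*(t₂^2*(2-2*c)) ≤ t₁*r^2*(δ^2*S) := by
      have r1 : t₁*r^2*(t₂^2*(2-2*c)) = t₂*(2*t₁*r^2*t₂*(1-c)) := by ring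
      have r2 : t₂*(2*t₁*r^2*t₂*(1-c)) ≤ t₂*(U^2*(r*t₂ + t₁*t₂ + r^2)) :=
        mul_le_mul_of_nonneg_left hcomb ht2.le
      have r3 : t₂*(U^2*(r*t₂ + t₁*t₂ + r^2)) ≤ δ^2*(r*t₂^2 + t₁*t₂^2 + t₂*r^2) := by
        have hU2 : U^2 ≤ δ^2 := by nlinarith
        have hX : (0:ℝ) ≤ r*t₂ + t₁*t₂ + r^2 := by positivity
        have hm : t₂*(U^2*(r*t₂ + t₁*t₂ + r^2)) ≤ t₂*(δ^2*(r*t₂ + t₁*t₂ + r^2)) :=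
          mul_le_mul_of_nonneg_left (mul_le_mul_of_nonneg_right hU2 hX) ht2.le
        have req : δ^2*(r*t₂^2 + t₁*t₂^2 + t₂*r^2) = t₂*(δ^2*(r*t₂ + t₁*t₂ + r^2)) := by ring
        linarith [hm, req]
      have r4 : δ^2*(r*t₂^2 + t₁*t₂^2 + t₂*r^2) ≤ t₁*r^2*(δ^2*S) := by
        have expand : t₁*r^2*(δ^2*S) = δ^2*(2*L*t₁*r + L^2*t₁ + 2*t₁*r^2) := by
          rw [hS]; field_simp
        rw [expand]
        have q1 : t₂*t₂ ≤ (2*t₁)*L := mul_le_mul ht21 ht2L ht2.le (by positivity)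
        have b1 : r*t₂^2 ≤ 2*L*t₁*r := by nlinarith [mul_le_mul_of_nonneg_left q1 hr.le]
        have q2 : t₂^2 ≤ L^2 := by nlinarith
        have b2 : t₁*t₂^2 ≤ L^2*t₁ := by nlinarith [mul_le_mul_of_nonneg_left q2 ht1.le]
        have b3 : t₂*r^2 ≤ 2*t₁*r^2 := by nlinarith [sq_nonneg r]
        have hδ2 : (0:ℝ) ≤ δ^2 := sq_nonneg δ
        linarith [mul_le_mul_of_nonneg_left b1 hδ2, mul_le_mul_of_nonneg_left b2 hδ2,
          mul_le_mul_of_nonneg_left b3 hδ2]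
      linarith [r1, r2, r3, r4]
    have hpos : 0 < t₁*r^2 := by positivity
    exact le_of_mul_le_mul_left key hpos
  have hfin : t₂*‖ν₁ - ν₂‖ ≤ δ*(1+S) := by
    apply sq_le_imp_le (by positivity) (by positivity)
    have h1 : (t₂*‖ν₁ - ν₂‖)^2 = t₂^2*‖ν₁ - ν₂‖^2 := by ring
    have h2 : δ^2*S ≤ (δ*(1+S))^2 := by nlinarith [sq_nonneg δ, hS0]
    linarith [h1 ▸ (hbsq.trans h2)]
  -- final triangle inequality
  have edec : z₁ - z₂ = (u - (t₁ - t₂) • ν₁) - t₂ • (ν₁ - ν₂) := by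
    rw [hz1', hz2', hudef]; module
  calc ‖z₁ - z₂‖ ≤ ‖u - (t₁ - t₂) • ν₁‖ + ‖t₂ • (ν₁ - ν₂)‖ := by
        rw [edec]; exact norm_sub_le _ _
    _ ≤ (‖u‖ + ‖(t₁ - t₂) • ν₁‖) + ‖t₂ • (ν₁ - ν₂)‖ :=
        by gcongr; exact norm_sub_le _ _
    _ ≤ δ + η + δ*(1+S) := by
        have h1 : ‖(t₁ - t₂) • ν₁‖ = |t₁ - t₂| := by
          rw [norm_smul, hnν₁, Real.norm_eq_abs, mul_one]
        have h2 : ‖t₂ • (ν₁ - ν₂)‖ = t₂ * ‖ν₁ - ν₂‖ := by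
          rw [norm_smul, Real.norm_eq_abs, abs_of_nonneg ht2.le]
        have h3 : |t₁ - t₂| ≤ η := abs_le.2 ⟨by linarith, by linarith⟩
        have h4 : ‖u‖ ≤ δ := hu
        rw [h1, h2]
        linarith [hfin]

end Helpers

/-- The "tube" over a set of boundary points. -/
def tubeSet {d : ℕ} (Ω A : Set (EuclideanSpace ℝ (Fin d))) : Set (EuclideanSpace ℝ (Fin d)) :=
  {z | z ∈ Ω ∧ ∃ x ∈ A, dist z x = infDist z (frontier Ω)}

set_option maxHeartbeats 1000000 in
lemma tube_vol_le {d : ℕ} {Ω : Set (EuclideanSpace ℝ (Fin d))} {r L δ : ℝ}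
    (hr : 0 < r) (hL : 0 < L) (hd : 1 ≤ d)
    (hΩc : IsCompact Ω) (hEBC : ExteriorBallCondition Ω r) (hdiam : Metric.diam Ω ≤ L)
    {E : Set (EuclideanSpace ℝ (Fin d))} (hE : E ⊆ frontier Ω)
    (hδ0 : 0 < δ) (hδr : δ ≤ r)
    (hdiamE : ∀ x₁ ∈ E, ∀ x₂ ∈ E, dist x₁ x₂ ≤ δ) :
    volume (tubeSet Ω E) ≤
      ENNReal.ofReal ((L + 2*r) * (3 + (2*L/r + L^2/r^2 + 2))^d * δ^(d-1)) *
        volume (closedBall (0 : EuclideanSpace ℝ (Fin d)) 1) := by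
  classical
  set F := frontier Ω with hF
  set S : ℝ := 2*L/r + L^2/r^2 + 2 with hS
  have hS0 : 0 ≤ S := by positivity
  set ρ : ℝ := δ * (3 + S) with hρ
  have hρ0 : 0 ≤ ρ := by positivity
  have hΩclosed : IsClosed Ω := hΩc.isClosed
  have hFsub : F ⊆ Ω := by
    rw [hF]; intro x hx
    have := frontier_subset_closure (s := Ω) hx
    rwa [hΩclosed.closure_eq] at this
  -- basic facts for members of the tube
  have hmem : ∀ z ∈ tubeSet Ω E, 0 ≤ infDist z F ∧ infDist z F ≤ L := by
    rintro z ⟨hzΩ, x, hxE, hdx⟩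
    refine ⟨infDist_nonneg, ?_⟩
    rw [← hdx]
    calc dist z x ≤ Metric.diam Ω := dist_le_diam_of_mem hΩc.isBounded hzΩ (hFsub (hE hxE))
      _ ≤ L := hdiam
  set N : ℕ := ⌊L/δ⌋₊ with hN
  set Band : ℕ → Set (EuclideanSpace ℝ (Fin d)) :=
    fun k => {z ∈ tubeSet Ω E | infDist z F ∈ Ico ((k:ℝ)*δ) (((k:ℝ)+1)*δ)} with hBand
  have hcover : tubeSet Ω E ⊆ ⋃ k ∈ Finset.range (N+1), Band k := by
    intro z hz
    obtain ⟨ht0, htL⟩ := hmem z hz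
    set t := infDist z F with htdef
    set k : ℕ := ⌊t/δ⌋₊ with hk
    have hk1 : (k:ℝ)*δ ≤ t := by
      have := Nat.floor_le (a := t/δ) (by positivity)
      rw [← hk] at this
      calc (k:ℝ)*δ ≤ (t/δ)*δ := by nlinarith
        _ = t := by field_simp
    have hk2 : t < ((k:ℝ)+1)*δ := by
      have := Nat.lt_floor_add_one (t/δ)
      rw [← hk] at this
      calc t = (t/δ)*δ := by field_simp
        _ < ((k:ℝ)+1)*δ := by nlinarith
    have hkN : k ≤ N := by
      rw [hk, hN]
      exact Nat.floor_mono (by gcongr)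
    refine mem_biUnion (Finset.mem_range.mpr (Nat.lt_succ_of_le hkN)) ⟨hz, hk1, hk2⟩
  -- each band is inside a closed ball of radius ρ
  have hband_diam : ∀ k : ℕ, ∀ z₁ ∈ Band k, ∀ z₂ ∈ Band k, dist z₁ z₂ ≤ ρ := by
    rintro k z₁ ⟨⟨hz₁Ω, x₁, hx₁E, hdx₁⟩, hkt₁, hkt₁'⟩ z₂ ⟨⟨hz₂Ω, x₂, hx₂E, hdx₂⟩, hkt₂, hkt₂'⟩
    set t₁ := infDist z₁ F with ht₁def
    set t₂ := infDist z₂ F with ht₂def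
    have hx₁F : x₁ ∈ F := hE hx₁E
    have hx₂F : x₂ ∈ F := hE hx₂E
    have ht₁L : t₁ ≤ L := (hmem z₁ ⟨hz₁Ω, x₁, hx₁E, hdx₁⟩).2
    have ht₂L : t₂ ≤ L := (hmem z₂ ⟨hz₂Ω, x₂, hx₂E, hdx₂⟩).2
    rcases Nat.eq_zero_or_pos k with hk0 | hkpos
    · -- near-boundary band
      subst hk0
      simp only [Nat.cast_zero, zero_mul, zero_add, one_mul] at hkt₁' hkt₂'
      have h1 : dist z₁ x₁ = t₁ := hdx₁
      have h2 : dist z₂ x₂ = t₂ := hdx₂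
      calc dist z₁ z₂ ≤ dist z₁ x₁ + dist x₁ z₂ := dist_triangle _ _ _
        _ ≤ dist z₁ x₁ + (dist x₁ x₂ + dist x₂ z₂) := by
            linarith [dist_triangle x₁ x₂ z₂]
        _ ≤ t₁ + (δ + t₂) := by
            rw [h1]
            gcongr
            · exact hdiamE x₁ hx₁E x₂ hx₂E
            · rw [dist_comm]; exact le_of_eq h2
        _ ≤ ρ := by rw [hρ]; nlinarith
    · -- k ≥ 1 : use the quantitative normal-alignment estimate
      obtain ⟨y₁, hy₁Ω, hxy₁, hball₁⟩ := hEBC x₁ hx₁F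
      obtain ⟨y₂, hy₂Ω, hxy₂, hball₂⟩ := hEBC x₂ hx₂F
      have hkδ : δ ≤ (k:ℝ)*δ := by
        have : (1:ℝ) ≤ (k:ℝ) := by exact_mod_cast hkpos
        nlinarith
      have ht₁pos : 0 < t₁ := lt_of_lt_of_le hδ0 (hkδ.trans hkt₁)
      have ht₂pos : 0 < t₂ := lt_of_lt_of_le hδ0 (hkδ.trans hkt₂)
      have hk2k : ((k:ℝ)+1)*δ ≤ 2*((k:ℝ)*δ) := by
        have : (1:ℝ) ≤ (k:ℝ) := by exact_mod_cast hkpos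
        nlinarith
      have hz1col : z₁ = x₁ + (t₁/r) • (x₁ - y₁) := by
        have := collinear hr hz₁Ω hxy₁ hball₁ (by rw [hdx₁])
        rwa [hdx₁] at this
      have hz2col : z₂ = x₂ + (t₂/r) • (x₂ - y₂) := by
        have := collinear hr hz₂Ω hxy₂ hball₂ (by rw [hdx₂])
        rwa [hdx₂] at this
      have hstrong : r + t₁ ≤ ‖z₁ - y₂‖ := by
        rw [← dist_eq_norm]
        exact strongDist hr hz₁Ω hball₂
      have hfeet : r ≤ ‖x₂ - y₁‖ := by
        rw [← dist_eq_norm]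
        by_contra h
        push_neg at h
        exact (eq_empty_iff_forall_notMem.1 hball₁ x₂) ⟨by rwa [mem_ball], hFsub hx₂F⟩
      have hintb : t₂ ≤ ‖x₁ - z₂‖ := by
        rw [← dist_eq_norm, dist_comm, ht₂def]
        exact infDist_le_dist_of_mem hx₁F
      have hnorm : ‖x₁ - y₁‖ = r := by rw [← dist_eq_norm]; exact hxy₁
      have hnorm2 : ‖x₂ - y₂‖ = r := by rw [← dist_eq_norm]; exact hxy₂
      have hu : ‖x₁ - x₂‖ ≤ δ := by
        rw [← dist_eq_norm]; exact hdiamE x₁ hx₁E x₂ hx₂E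
      have := key_dist (L := L) (η := δ) hr hδ0.le hδ0.le hz1col hz2col hnorm hnorm2 hu
        ht₁pos ht₂pos
        (by nlinarith [hkt₂'.le, hkt₁, hk2k])
        ht₁L ht₂L
        (by nlinarith [hkt₁'.le, hkt₂])
        (by nlinarith [hkt₂'.le, hkt₁])
        hstrong hfeet hintb
      rw [dist_eq_norm, hρ]
      calc ‖z₁ - z₂‖ ≤ δ + δ + δ*(1 + S) := by rw [hS]; exact this
        _ = δ * (3 + S) := by ring
  -- volume of each band
  have hV1 : ∀ k : ℕ, volume (Band k) ≤
      ENNReal.ofReal (ρ^d) * volume (closedBall (0 : EuclideanSpace ℝ (Fin d)) 1) := by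
    intro k
    rcases (Band k).eq_empty_or_nonempty with h | ⟨z₀, hz₀⟩
    · simp [h]
    · have hsub : Band k ⊆ closedBall z₀ ρ := fun z hz =>
        mem_closedBall.mpr (hband_diam k z hz z₀ hz₀)
      calc volume (Band k) ≤ volume (closedBall z₀ ρ) := measure_mono hsub
        _ = ENNReal.ofReal (ρ^d) * volume (closedBall (0 : EuclideanSpace ℝ (Fin d)) 1) := by
            rw [Measure.addHaar_closedBall' volume z₀ hρ0, finrank_euclideanSpace_fin]
  -- summing up
  have hNle : (N:ℝ) ≤ L/δ := Nat.floor_le (by positivity)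
  calc volume (tubeSet Ω E) ≤ volume (⋃ k ∈ Finset.range (N+1), Band k) := measure_mono hcover
    _ ≤ ∑ k ∈ Finset.range (N+1), volume (Band k) := measure_biUnion_finset_le _ _
    _ ≤ ∑ _k ∈ Finset.range (N+1),
        ENNReal.ofReal (ρ^d) * volume (closedBall (0 : EuclideanSpace ℝ (Fin d)) 1) :=
        Finset.sum_le_sum (fun k _ => hV1 k)
    _ = (N+1) * (ENNReal.ofReal (ρ^d) * volume (closedBall (0 : EuclideanSpace ℝ (Fin d)) 1)) := by
        rw [Finset.sum_const, Finset.card_range, nsmul_eq_mul]; norm_cast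
    _ ≤ ENNReal.ofReal (L/δ + 2) *
        (ENNReal.ofReal (ρ^d) * volume (closedBall (0 : EuclideanSpace ℝ (Fin d)) 1)) := by
        gcongr
        have : ((N:ℝ≥0∞) + 1) = ENNReal.ofReal ((N:ℝ) + 1) := by
          rw [ENNReal.ofReal_add (by positivity) zero_le_one]
          simp [ENNReal.ofReal_natCast]
        rw [this]
        exact ENNReal.ofReal_le_ofReal (by linarith)
    _ ≤ ENNReal.ofReal ((L + 2*r) * (3 + S)^d * δ^(d-1)) *
        volume (closedBall (0 : EuclideanSpace ℝ (Fin d)) 1) := by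
        rw [← mul_assoc, ← ENNReal.ofReal_mul (by positivity)]
        refine mul_le_mul_of_nonneg_right (ENNReal.ofReal_le_ofReal ?_) zero_le
        have hδd : δ^d = δ^(d-1) * δ := by
          conv_lhs => rw [show d = (d-1)+1 by omega]
          rw [pow_succ]
        have h3S : (0:ℝ) ≤ (3+S)^d := by positivity
        have hδd1 : (0:ℝ) ≤ δ^(d-1) := by positivity
        have e1 : (L/δ + 2) * ρ^d = ((L/δ)*δ^d + 2*δ^d) * (3+S)^d := by
          rw [hρ, mul_pow]; ring
        have e2 : (L/δ)*δ^d = L * δ^(d-1) := by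
          rw [hδd]; field_simp
        have e3 : 2*δ^d ≤ 2*r*δ^(d-1) := by
          rw [hδd]; nlinarith
        rw [e1, e2]
        nlinarith [mul_le_mul_of_nonneg_right e3 h3S, mul_le_mul_of_nonneg_right
          (le_refl (L * δ^(d-1))) h3S]

set_option maxHeartbeats 1000000 in
lemma tube_hausdorff {d : ℕ} {Ω : Set (EuclideanSpace ℝ (Fin d))} {r L : ℝ}
    (hr : 0 < r) (hL : 0 < L) (hd : 1 ≤ d)
    (hΩc : IsCompact Ω) (hEBC : ExteriorBallCondition Ω r) (hdiam : Metric.diam Ω ≤ L)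
    {A : Set (EuclideanSpace ℝ (Fin d))} (hA : A ⊆ frontier Ω) :
    volume (tubeSet Ω A) ≤
      ENNReal.ofReal ((L + 2*r) * (3 + (2*L/r + L^2/r^2 + 2))^d *
        (volume (closedBall (0 : EuclideanSpace ℝ (Fin d)) 1)).toReal) * μH[(d : ℝ) - 1] A := by
  classical
  set S : ℝ := 2*L/r + L^2/r^2 + 2 with hS
  have hS0 : 0 ≤ S := by positivity
  set C₀ : ℝ := (L + 2*r) * (3 + S)^d with hC₀
  have hC₀pos : 0 < C₀ := by positivity
  set V1 : ℝ≥0∞ := volume (closedBall (0 : EuclideanSpace ℝ (Fin d)) 1) with hV1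
  have hV1top : V1 ≠ ∞ := measure_closedBall_lt_top.ne
  have hV1pos : 0 < V1 := measure_closedBall_pos volume 0 one_pos
  set CC : ℝ := C₀ * V1.toReal with hCC
  have hCCpos : 0 < CC := by
    apply mul_pos hC₀pos
    exact ENNReal.toReal_pos hV1pos.ne' hV1top
  have hV1eq : V1 = ENNReal.ofReal V1.toReal := (ENNReal.ofReal_toReal hV1top).symm
  set c : ℝ≥0∞ := ENNReal.ofReal CC with hc
  have hc0 : c ≠ 0 := by
    rw [hc]; simpa using hCCpos
  have hctop : c ≠ ∞ := ENNReal.ofReal_ne_top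
  have hcast : ((d : ℝ) - 1) = ((d - 1 : ℕ) : ℝ) := by
    have := Nat.cast_sub (R := ℝ) hd
    rw [this]; norm_num
  have hprod : ∀ a : ℝ, 0 ≤ a →
      ENNReal.ofReal ((L + 2*r) * (3 + (2*L/r + L^2/r^2 + 2))^d * a) * V1 =
        c * ENNReal.ofReal a := by
    intro a ha
    have h1 : c * ENNReal.ofReal a = ENNReal.ofReal (CC * a) :=
      (ENNReal.ofReal_mul hCCpos.le).symm
    have h2 : ENNReal.ofReal ((L + 2*r) * (3 + (2*L/r + L^2/r^2 + 2))^d * a) * V1 =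
        ENNReal.ofReal ((L + 2*r) * (3 + (2*L/r + L^2/r^2 + 2))^d * a * V1.toReal) := by
      conv_lhs => rw [hV1eq]
      rw [← ENNReal.ofReal_mul (by positivity)]
    rw [h1, h2]
    congr 1
    rw [hCC, hC₀, hS]
    ring
  -- the main per-cover estimate
  have hmain : ∀ (t : ℕ → Set (EuclideanSpace ℝ (Fin d))), A ⊆ ⋃ n, t n →
      (∀ n, EMetric.diam (t n) ≤ ENNReal.ofReal r) →
      volume (tubeSet Ω A) ≤ c * ∑' n, ⨆ _ : (t n).Nonempty, EMetric.diam (t n) ^ ((d:ℝ) - 1) := by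
    intro t hcov hsmall
    have hsub : tubeSet Ω A ⊆ ⋃ n, tubeSet Ω (A ∩ t n) := by
      rintro z ⟨hzΩ, x, hxA, hdx⟩
      rcases mem_iUnion.mp (hcov hxA) with ⟨n, hn⟩
      exact mem_iUnion.mpr ⟨n, hzΩ, x, ⟨hxA, hn⟩, hdx⟩
    refine (measure_mono hsub).trans ((measure_iUnion_le _).trans ?_)
    rw [← ENNReal.tsum_mul_left]
    refine ENNReal.tsum_le_tsum fun n => ?_
    rcases (A ∩ t n).eq_empty_or_nonempty with hemp | hne
    · have : tubeSet Ω (A ∩ t n) = ∅ := by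
        rw [hemp]; ext z; simp [tubeSet]
      simp [this]
    · have htn : (t n).Nonempty := hne.mono inter_subset_right
      rw [iSup_pos htn]
      set e : ℝ≥0∞ := EMetric.diam (t n) with he
      have hefin : e ≠ ∞ := (lt_of_le_of_lt (hsmall n) ENNReal.ofReal_lt_top).ne
      set δ' : ℝ := e.toReal with hδ'
      have hδ'0 : 0 ≤ δ' := ENNReal.toReal_nonneg
      have hδ'r : δ' ≤ r := by
        rw [hδ']
        exact ENNReal.toReal_le_of_le_ofReal hr.le (hsmall n)
      have hdiamE : ∀ x₁ ∈ A ∩ t n, ∀ x₂ ∈ A ∩ t n, dist x₁ x₂ ≤ δ' := by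
        intro x₁ hx₁ x₂ hx₂
        rw [dist_edist, hδ']
        exact ENNReal.toReal_mono hefin (EMetric.edist_le_diam_of_mem hx₁.2 hx₂.2)
      have hAn : A ∩ t n ⊆ frontier Ω := fun x hx => hA hx.1
      have hepow : e ^ ((d:ℝ) - 1) = ENNReal.ofReal (δ' ^ (d - 1)) := by
        rw [hcast, ENNReal.rpow_natCast, ENNReal.ofReal_pow hδ'0]
        congr 1
        rw [hδ', ENNReal.ofReal_toReal hefin]
      rcases lt_or_eq_of_le hδ'0 with hδ'pos | hδ'zero
      · -- positive diameter : direct application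
        refine (tube_vol_le hr hL hd hΩc hEBC hdiam hAn hδ'pos hδ'r hdiamE).trans ?_
        rw [hepow, hprod _ (by positivity)]
      · -- zero diameter
        rcases eq_or_lt_of_le hd with hd1 | hd2
        · -- d = 1 : exponent is 0, use δ = r
          have hdiamE' : ∀ x₁ ∈ A ∩ t n, ∀ x₂ ∈ A ∩ t n, dist x₁ x₂ ≤ r := fun x₁ h₁ x₂ h₂ =>
            (hdiamE x₁ h₁ x₂ h₂).trans hδ'r
          refine (tube_vol_le hr hL hd hΩc hEBC hdiam hAn hr (le_refl r) hdiamE').trans ?_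
          have hd1' : d - 1 = 0 := by omega
          rw [hepow, hd1']
          rw [hd1', pow_zero] at *
          rw [hprod 1 zero_le_one]
          simp
        · -- d ≥ 2 : the tube has zero volume
          have hvol0 : volume (tubeSet Ω (A ∩ t n)) = 0 := by
            have hb : ∀ η : ℝ, 0 < η → η ≤ r →
                volume (tubeSet Ω (A ∩ t n)) ≤ c * ENNReal.ofReal (η^(d-1)) := by
              intro η hη0 hηr
              have hdiamE'' : ∀ x₁ ∈ A ∩ t n, ∀ x₂ ∈ A ∩ t n, dist x₁ x₂ ≤ η := fun x₁ h₁ x₂ h₂ =>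
                (hdiamE x₁ h₁ x₂ h₂).trans (by rw [← hδ'zero] at *; exact hη0.le)
              have := tube_vol_le hr hL hd hΩc hEBC hdiam hAn hη0 hηr hdiamE''
              rwa [hprod _ (by positivity)] at this
            have htend : Tendsto (fun η : ℝ => c * ENNReal.ofReal (η^(d-1)))
                (𝓝[>] (0:ℝ)) (𝓝 0) := by
              have h1 : Tendsto (fun η : ℝ => η^(d-1)) (𝓝[>] (0:ℝ)) (𝓝 0) := by
                have : Tendsto (fun η : ℝ => η^(d-1)) (𝓝 (0:ℝ)) (𝓝 ((0:ℝ)^(d-1))) :=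
                  (continuous_pow (d-1)).tendsto 0
                rw [zero_pow (by omega : d - 1 ≠ 0)] at this
                exact this.mono_left nhdsWithin_le_nhds
              have h2 : Tendsto (fun η : ℝ => ENNReal.ofReal (η^(d-1)))
                  (𝓝[>] (0:ℝ)) (𝓝 0) := by
                have := (ENNReal.continuous_ofReal.tendsto 0).comp h1
                simpa [Function.comp_def] using this
              have := ENNReal.Tendsto.const_mul h2 (Or.inr hctop)
              simpa using this
            have hev : ∀ᶠ η in 𝓝[>] (0:ℝ), volume (tubeSet Ω (A ∩ t n)) ≤
                c * ENNReal.ofReal (η^(d-1)) := by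
              filter_upwards [Ioc_mem_nhdsGT hr] with η hη
              exact hb η hη.1 hη.2
            have := ge_of_tendsto htend hev
            exact le_antisymm this zero_le
          simp [hvol0]
  -- conclude via the definition of Hausdorff measure
  have hIle : volume (tubeSet Ω A) / c ≤ μH[(d : ℝ) - 1] A := by
    rw [Measure.hausdorffMeasure_apply]
    refine le_iSup₂_of_le (ENNReal.ofReal r) (by simpa using hr) ?_
    refine le_iInf fun t => le_iInf fun hcov => le_iInf fun hsmall => ?_
    rw [ENNReal.div_le_iff_le_mul (Or.inl hc0) (Or.inl hctop), mul_comm]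
    exact hmain t hcov hsmall
  have hfinal := (ENNReal.div_le_iff_le_mul (Or.inl hc0) (Or.inl hctop)).mp hIle
  rwa [mul_comm] at hfinal

/-- If `Ω` satisfies a uniform exterior ball condition of radius `r > 0` and
`f⁺ ∈ L^∞(Ω)` is a nonnegative density, then `(P_∂Ω)#(f⁺ dx)` has bounded density w.r.t.
`H^{d-1}⌊∂Ω`, with bound depending only on `d`, `r`, `diam Ω` and `‖f⁺‖_∞`. -/
theorem projection_pushforward_bounded_density (d : ℕ) (r L : ℝ) (hr : 0 < r) (hL : 0 < L) :
    ∃ C : ℝ, 0 < C ∧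
      ∀ (Ω : Set (EuclideanSpace ℝ (Fin d))), IsCompact Ω → ExteriorBallCondition Ω r →
        Metric.diam Ω ≤ L →
        ∀ (fp : EuclideanSpace ℝ (Fin d) → ℝ) (M : ℝ), Measurable fp → (∀ x, 0 ≤ fp x) →
          (∀ x, fp x ≤ M) →
          ∀ (P : EuclideanSpace ℝ (Fin d) → EuclideanSpace ℝ (Fin d)), Measurable P →
            (∀ᵐ x ∂(volume.restrict Ω), P x ∈ frontier Ω ∧
              dist x (P x) = Metric.infDist x (frontier Ω)) →
            Measure.map P ((volume.restrict Ω).withDensity fun x => ENNReal.ofReal (fp x)) ≤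
              (ENNReal.ofReal (C * M)) • (μH[(d : ℝ) - 1]).restrict (frontier Ω) := by
  classical
  set V1 : ℝ≥0∞ := volume (closedBall (0 : EuclideanSpace ℝ (Fin d)) 1) with hV1
  have hV1top : V1 ≠ ∞ := measure_closedBall_lt_top.ne
  have hV1pos : 0 < V1 := measure_closedBall_pos volume 0 one_pos
  set C : ℝ := (L + 2*r) * (3 + (2*L/r + L^2/r^2 + 2))^d * V1.toReal with hC
  have hCpos : 0 < C := by
    apply mul_pos (by positivity)
    exact ENNReal.toReal_pos hV1pos.ne' hV1top
  refine ⟨C, hCpos, ?_⟩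
  intro Ω hΩc hEBC hdiam fp M hfpm hfp0 hfpM P hPm hPae
  have hM0 : 0 ≤ M := le_trans (hfp0 0) (hfpM 0)
  have hΩmeas : MeasurableSet Ω := hΩc.isClosed.measurableSet
  set F := frontier Ω with hF
  set g : EuclideanSpace ℝ (Fin d) → ℝ≥0∞ := fun x => ENNReal.ofReal (fp x) with hg
  set μ := (volume.restrict Ω).withDensity g with hμ
  rcases eq_empty_or_nonempty F with hfe | hfne
  · -- empty frontier: restricted measure must vanish
    have hbad : (volume.restrict Ω) {x | ¬ (P x ∈ F ∧ dist x (P x) = infDist x F)} = 0 :=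
      ae_iff.mp hPae
    have huniv : {x | ¬ (P x ∈ F ∧ dist x (P x) = infDist x F)} = univ := by
      ext x
      simp only [mem_setOf_eq, mem_univ, iff_true]
      intro hcon
      rw [hfe] at hcon
      exact absurd hcon.1 (notMem_empty _)
    rw [huniv] at hbad
    have h0 : volume.restrict Ω = 0 := Measure.measure_univ_eq_zero.mp hbad
    have hμ0 : μ = 0 := by
      rw [hμ, h0]
      exact withDensity_zero_left g
    rw [hμ0, Measure.map_zero]
    exact Measure.zero_le _
  · -- nonempty frontier: the dimension is at least 1
    have hd : 1 ≤ d := by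
      by_contra hcon
      have hd0 : d = 0 := by omega
      subst hd0
      obtain ⟨x, hx⟩ := hfne
      have hsub : ∀ a b : EuclideanSpace ℝ (Fin 0), a = b := fun a b =>
        by ext i; exact i.elim0
      rcases Ω.eq_empty_or_nonempty with h | ⟨w, hw⟩
      · rw [hF, h] at hx; simp at hx
      · have hU : Ω = univ := eq_univ_of_forall fun b => (hsub b w) ▸ hw
        rw [hF, hU] at hx; simp at hx
    -- bad set
    set Nbad := {x | ¬ (P x ∈ F ∧ dist x (P x) = infDist x F)} with hNbad
    have hbad : volume (Nbad ∩ Ω) = 0 := by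
      have := ae_iff.mp hPae
      rwa [Measure.restrict_apply' hΩmeas] at this
    -- main measure inequality, set by set
    refine Measure.le_iff.mpr fun s hs => ?_
    have hsP : MeasurableSet (P ⁻¹' s) := hs.preimage hPm
    have hmap : (Measure.map P μ) s = μ (P ⁻¹' s) := Measure.map_apply hPm hs
    have hμle : μ (P ⁻¹' s) ≤ ENNReal.ofReal M * volume (P ⁻¹' s ∩ Ω) := by
      rw [hμ, withDensity_apply _ hsP]
      calc ∫⁻ x in P ⁻¹' s, g x ∂(volume.restrict Ω)
          ≤ ∫⁻ _x in P ⁻¹' s, ENNReal.ofReal M ∂(volume.restrict Ω) :=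
            lintegral_mono fun x => ENNReal.ofReal_le_ofReal (hfpM x)
        _ = ENNReal.ofReal M * (volume.restrict Ω) (P ⁻¹' s) := by
            rw [setLIntegral_const]
        _ = ENNReal.ofReal M * volume (P ⁻¹' s ∩ Ω) := by
            rw [Measure.restrict_apply hsP]
    have hincl : P ⁻¹' s ∩ Ω ⊆ tubeSet Ω (s ∩ F) ∪ (Nbad ∩ Ω) := by
      rintro z ⟨hzs, hzΩ⟩
      by_cases hzb : z ∈ Nbad
      · exact Or.inr ⟨hzb, hzΩ⟩
      · rw [hNbad, mem_setOf_eq, not_not] at hzb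
        exact Or.inl ⟨hzΩ, P z, ⟨hzs, hzb.1⟩, hzb.2⟩
    have hvol : volume (P ⁻¹' s ∩ Ω) ≤ volume (tubeSet Ω (s ∩ F)) := by
      calc volume (P ⁻¹' s ∩ Ω) ≤ volume (tubeSet Ω (s ∩ F) ∪ (Nbad ∩ Ω)) :=
            measure_mono hincl
        _ ≤ volume (tubeSet Ω (s ∩ F)) + volume (Nbad ∩ Ω) := measure_union_le _ _
        _ = volume (tubeSet Ω (s ∩ F)) := by rw [hbad, add_zero]
    have htube := tube_hausdorff hr hL hd hΩc hEBC hdiam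
      (A := s ∩ F) (fun x hx => hx.2)
    rw [hmap]
    calc μ (P ⁻¹' s) ≤ ENNReal.ofReal M * volume (P ⁻¹' s ∩ Ω) := hμle
      _ ≤ ENNReal.ofReal M * (ENNReal.ofReal C * μH[(d : ℝ) - 1] (s ∩ F)) := by
          refine mul_le_mul_of_nonneg_left (hvol.trans ?_) zero_le
          rw [hC, hV1]
          exact htube
      _ = ENNReal.ofReal (C * M) * μH[(d : ℝ) - 1] (s ∩ F) := by
          rw [← mul_assoc, ← ENNReal.ofReal_mul hM0, mul_comm M C]
      _ = ((ENNReal.ofReal (C * M)) • (μH[(d : ℝ) - 1]).restrict F) s := by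
          rw [Measure.smul_apply, smul_eq_mul, Measure.restrict_apply hs]
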